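/- Let α ≥ 1, γ > 0, P > 0, M > 0, B_s > 0, B_d = B_s/γ. Then H_avg / min H_p2p = (1+α)P / (2·sqrt(γ·(1+α)·P) + 2γ), where H_avg = (1+α)MP/B_s and min H_p2p = (2M/B_d)·(P/L* + 1) with L* = sqrt(B_s·P/((1+α)B_d)). -/

import Mathlib

theorem speedup_ratio_closed_form (α γ P M Bs Bd : ℝ)
    (hα : 1 ≤ α) (hγ : 0 < γ) (hP : 0 < P) (hM : 0 < M) (hBs : 0 < Bs)
    (hBd : Bd = Bs / γ) :
    ((1 + α) * M * P / Bs) /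
        ((2 * M / Bd) * (P / Real.sqrt (Bs * P / ((1 + α) * Bd)) + 1)) =
      (1 + α) * P / (2 * Real.sqrt (γ * (1 + α) * P) + 2 * γ) := by
  subst hBd
  have h1α : (0:ℝ) < 1 + α := by linarith
  have key : Bs * P / ((1 + α) * (Bs / γ)) = (γ * (1 + α) * P) / ((1 + α) ^ 2) := by
    field_simp
  rw [key, Real.sqrt_div (by positivity), Real.sqrt_sq h1α.le]
  set s := Real.sqrt (γ * (1 + α) * P) with hsdef
  have hs0 : 0 < s := Real.sqrt_pos.mpr (by positivity)
  have hs2 : s ^ 2 = γ * (1 + α) * P := Real.sq_sqrt (by positivity)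
  rw [div_eq_div_iff]
  · field_simp
    linear_combination hs2
  · have : 0 < P / (s / (1 + α)) + 1 := by positivity
    positivity
  · positivity
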